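/- Let R = ℂ[x₀,…,x₄] and let l₀, l₁, l₂, l₃, l₄ be ℂ-linearly independent linear forms in R. Let M_b be the 6×6 block-diagonal skew-symmetric matrix over R with diagonal blocks ((0, l₀, l₁), (−l₀, 0, l₂), (−l₁, −l₂, 0)) and ((0, l₂, l₃), (−l₂, 0, l₄), (−l₃, −l₄, 0)), and let S_bᵀ be the 2×6 matrix with rows (l₂, −l₁, l₀, 0, 0, 0) and (0, 0, 0, l₄, −l₃, l₂). Then the kernel of the R-linear map R⁶ → R² given by v ↦ S_bᵀ·v equals the R-submodule of R⁶ generated by the six columns of M_b. -/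

import Mathlib

open MvPolynomial Matrix

abbrev R5 := MvPolynomial (Fin 5) ℂ


lemma mem_two {i j : Fin 5} (a : R5)
    (h : ∀ m : Fin 5 →₀ ℕ, m i = 0 → m j = 0 → coeff m a = 0) :
    ∃ p q : R5, a = X i * p + X j * q := by
  have hmem : a ∈ Ideal.span ({X i, X j} : Set R5) := by
    have h2 : a ∈ Ideal.span (MvPolynomial.X '' ({i, j} : Set (Fin 5))) := by
      rw [mem_ideal_span_X_image]
      intro m hm
      by_contra hc
      push_neg at hc
      simp only [Set.mem_insert_iff, Set.mem_singleton_iff] at hc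
      exact (mem_support_iff.1 hm) (h m (hc i (Or.inl rfl)) (hc j (Or.inr rfl)))
    simpa [Set.image_insert_eq] using h2
  obtain ⟨p, q, hpq⟩ := Ideal.mem_span_pair.1 hmem
  exact ⟨p, q, by rw [← hpq]; ring⟩

lemma dvd_one {i : Fin 5} (a : R5)
    (h : ∀ m : Fin 5 →₀ ℕ, m i = 0 → coeff m a = 0) :
    ∃ r : R5, a = X i * r := by
  have hmem : a ∈ Ideal.span ({X i} : Set R5) := by
    have h2 : a ∈ Ideal.span (MvPolynomial.X '' ({i} : Set (Fin 5))) := by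
      rw [mem_ideal_span_X_image]
      intro m hm
      refine ⟨i, rfl, fun h0 => (mem_support_iff.1 hm) (h m h0)⟩
    simpa using h2
  obtain ⟨r, hr⟩ := Ideal.mem_span_singleton.1 hmem
  exact ⟨r, hr⟩

lemma var_syzygy {i j k : Fin 5} (hij : i ≠ j) (hik : i ≠ k) (hjk : j ≠ k)
    (a b c : R5) (h : X k * a = X j * b - X i * c) :
    ∃ p q r : R5, a = X i * p + X j * q ∧ b = X k * q + X i * r ∧
      c = -(X k * p) + X j * r := by
  classical
  -- step 1 : a ∈ (X i, X j)
  obtain ⟨p, q, hpq⟩ := mem_two (i := i) (j := j) a (fun m hmi hmj => by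
    have e1 : coeff (Finsupp.single k 1 + m) (X k * a) = coeff m a := coeff_X_mul m k a
    have e2 : coeff (Finsupp.single k 1 + m) (X j * b) = 0 := by
      rw [coeff_X_mul', if_neg]
      simp [Finsupp.mem_support_iff, Finsupp.single_apply, hjk.symm, hmj]
    have e3 : coeff (Finsupp.single k 1 + m) (X i * c) = 0 := by
      rw [coeff_X_mul', if_neg]
      simp [Finsupp.mem_support_iff, Finsupp.single_apply, hik.symm, hmi]
    have := congrArg (coeff (Finsupp.single k 1 + m)) h
    rw [coeff_sub, e1, e2, e3] at this
    simpa using this)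
  -- step 2 : X i ∣ b - X k * q
  have key : X i * (X k * p + c) = X j * (b - X k * q) := by
    have : X k * (X i * p + X j * q) = X j * b - X i * c := hpq ▸ h
    linear_combination this
  obtain ⟨r, hr⟩ := dvd_one (i := i) (b - X k * q) (fun m hmi => by
    have e1 : coeff (Finsupp.single j 1 + m) (X j * (b - X k * q)) = coeff m (b - X k * q) :=
      coeff_X_mul _ j _
    have e2 : coeff (Finsupp.single j 1 + m) (X i * (X k * p + c)) = 0 := by
      rw [coeff_X_mul', if_neg]
      simp [Finsupp.mem_support_iff, Finsupp.single_apply, hij.symm, hmi]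
    rw [← e1, ← key, e2])
  refine ⟨p, q, r, hpq, by linear_combination hr, ?_⟩
  -- step 3 : cancel X i
  have hXi : (X i : R5) ≠ 0 := X_ne_zero i
  have : X i * (X k * p + c) = X i * (X j * r) := by
    rw [key, hr]; ring
  have := mul_left_cancel₀ hXi this
  linear_combination this

-- finsupp degree one characterization
lemma deg_one_single {m : Fin 5 →₀ ℕ} (h : Finsupp.degree m = 1) :
    ∃ t, m = Finsupp.single t 1 := by
  have hm0 : m ≠ 0 := by
    intro h0; rw [h0] at h; simp at h
  obtain ⟨t, ht⟩ := Finsupp.ne_iff.1 hm0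
  simp only [Finsupp.coe_zero, Pi.zero_apply] at ht
  have hmt : m t = 1 := by
    have h1 := Finsupp.le_degree t m
    omega
  refine ⟨t, Finsupp.ext fun s => ?_⟩
  rcases eq_or_ne s t with rfl | hst
  · simp [hmt]
  · rw [Finsupp.single_apply, if_neg (Ne.symm hst)]
    by_contra hs
    have hsub : ({s, t} : Finset (Fin 5)) ⊆ m.support := by
      intro x hx
      simp only [Finset.mem_insert, Finset.mem_singleton] at hx
      rcases hx with rfl | rfl <;> simp [Finsupp.mem_support_iff, hs, ht]
    have := Finset.sum_le_sum_of_subset (f := m) hsub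
    rw [Finset.sum_insert (by simpa using hst), Finset.sum_singleton] at this
    rw [Finsupp.degree_apply] at h
    omega

-- expansion of a homogeneous degree 1 polynomial
lemma homog_expand {p : MvPolynomial (Fin 5) ℂ} (hp : p.IsHomogeneous 1) :
    p = ∑ j : Fin 5, C (coeff (Finsupp.single j 1) p) * X j := by
  classical
  ext m
  rw [coeff_sum]
  simp only [coeff_C_mul, coeff_X', mul_ite, mul_one, mul_zero]
  by_cases hm : Finsupp.degree m = 1
  · obtain ⟨t, rfl⟩ := deg_one_single hm
    rw [Finset.sum_eq_single t]
    · simp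
    · intro b _ hbt
      rw [if_neg]
      intro hb
      exact hbt (by simpa using (Finsupp.single_left_inj one_ne_zero).1 hb)
    · simp
  · rw [hp.coeff_eq_zero hm, Finset.sum_eq_zero]
    intro b _
    rw [if_neg]
    rintro rfl
    exact hm (by rw [Finsupp.degree_apply, Finsupp.support_single_ne_zero _ one_ne_zero]; simp)

lemma lin_syzygy (l : Fin 5 → R5) (hl : ∀ t, (l t).IsHomogeneous 1)
    (hind : LinearIndependent ℂ l) {i j k : Fin 5}
    (hij : i ≠ j) (hik : i ≠ k) (hjk : j ≠ k)
    (a b c : R5) (h : l k * a = l j * b - l i * c) :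
    ∃ p q r : R5, a = l i * p + l j * q ∧ b = l k * q + l i * r ∧
      c = -(l k * p) + l j * r := by
  classical
  set A : Matrix (Fin 5) (Fin 5) ℂ := fun s t => coeff (Finsupp.single t 1) (l s) with hA
  have hexp : ∀ s, l s = ∑ t : Fin 5, C (A s t) * X t := fun s => homog_expand (hl s)
  -- A is invertible
  have hrows : LinearIndependent ℂ (fun s => A s) := by
    rw [Fintype.linearIndependent_iff]
    intro g hg
    have : ∑ s, g s • l s = 0 := by
      calc ∑ s, g s • l s = ∑ s, g s • ∑ t, C (A s t) * X t := by
            simp_rw [← hexp]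
          _ = ∑ t, C (∑ s, g s * A s t) * X t := by
            simp_rw [Finset.smul_sum]
            rw [Finset.sum_comm]
            refine Finset.sum_congr rfl fun t _ => ?_
            rw [_root_.map_sum, Finset.sum_mul]
            refine Finset.sum_congr rfl fun s _ => ?_
            rw [smul_eq_C_mul, ← mul_assoc, ← C_mul]
          _ = 0 := by
            have hz : ∀ t : Fin 5, ∑ s, g s * A s t = 0 := by
              intro t
              have := congrFun hg t
              simpa [Matrix.smul_apply, smul_eq_mul] using this
            refine Finset.sum_eq_zero fun t _ => ?_
            rw [hz, _root_.map_zero, zero_mul]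
    exact Fintype.linearIndependent_iff.1 hind g this
  have hAu : IsUnit A.det := (Matrix.isUnit_iff_isUnit_det A).1
    (Matrix.linearIndependent_rows_iff_isUnit.1 hrows)
  have hAB : A * A⁻¹ = 1 := Matrix.mul_nonsing_inv A hAu
  have hBA : A⁻¹ * A = 1 := Matrix.nonsing_inv_mul A hAu
  set φ : R5 →ₐ[ℂ] R5 := aeval l with hφ
  set ψ : R5 →ₐ[ℂ] R5 := aeval (fun s => ∑ t : Fin 5, C (A⁻¹ s t) * X t) with hψ
  have expand_aeval : ∀ (f : R5 →ₐ[ℂ] R5) (M : Matrix (Fin 5) (Fin 5) ℂ) (s : Fin 5),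
      f (∑ t : Fin 5, C (M s t) * X t) = ∑ t : Fin 5, C (M s t) * f (X t) := by
    intro f M s
    rw [_root_.map_sum]
    refine Finset.sum_congr rfl fun t _ => ?_
    rw [_root_.map_mul, algHom_C]; rfl
  have sum_C_mul_sum : ∀ (M N : Matrix (Fin 5) (Fin 5) ℂ) (s : Fin 5),
      ∑ t : Fin 5, C (M s t) * ∑ u : Fin 5, C (N t u) * X u
        = ∑ u : Fin 5, C ((M * N) s u) * X u := by
    intro M N s
    simp_rw [Finset.mul_sum]
    rw [Finset.sum_comm]
    refine Finset.sum_congr rfl fun u _ => ?_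
    rw [Matrix.mul_apply, _root_.map_sum, Finset.sum_mul]
    refine Finset.sum_congr rfl fun t _ => ?_
    rw [← mul_assoc, ← C_mul]
  have one_expand : ∀ s : Fin 5,
      ∑ u : Fin 5, C ((1 : Matrix (Fin 5) (Fin 5) ℂ) s u) * X u = X s := by
    intro s
    rw [Finset.sum_eq_single s]
    · rw [Matrix.one_apply_eq, _root_.map_one, one_mul]
    · intro u _ hus
      rw [Matrix.one_apply_ne (Ne.symm hus), _root_.map_zero, zero_mul]
    · simp
  have hψl : ∀ s, ψ (l s) = X s := by
    intro s
    rw [hexp s, expand_aeval ψ A s]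
    simp only [hψ, aeval_X]
    rw [sum_C_mul_sum A A⁻¹ s, hAB, one_expand]
  have hφψX : ∀ s, φ (ψ (X s)) = X s := by
    intro s
    rw [hψ, aeval_X, expand_aeval φ A⁻¹ s]
    simp only [hφ, aeval_X]
    rw [Finset.sum_congr rfl (fun t _ => by rw [hexp t]), sum_C_mul_sum A⁻¹ A s, hBA, one_expand]
  have hφψ : ∀ x, φ (ψ x) = x := by
    have : φ.comp ψ = AlgHom.id ℂ R5 := by
      apply MvPolynomial.algHom_ext
      intro s
      simpa using hφψX s
    intro x
    exact congrFun (congrArg (DFunLike.coe) (congrArg AlgHom.toRingHom this)) x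
  obtain ⟨p, q, r, h1, h2, h3⟩ := var_syzygy hij hik hjk (ψ a) (ψ b) (ψ c) (by
    have := congrArg ψ h
    rw [_root_.map_sub, _root_.map_mul, _root_.map_mul, _root_.map_mul, hψl, hψl, hψl] at this
    exact this)
  refine ⟨φ p, φ q, φ r, ?_, ?_, ?_⟩
  · have := congrArg φ h1
    rw [hφψ, _root_.map_add, _root_.map_mul, _root_.map_mul] at this
    simpa [hφ, aeval_X] using this
  · have := congrArg φ h2
    rw [hφψ, _root_.map_add, _root_.map_mul, _root_.map_mul] at this
    simpa [hφ, aeval_X] using this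
  · have := congrArg φ h3
    rw [hφψ, _root_.map_add, _root_.map_neg, _root_.map_mul, _root_.map_mul] at this
    simpa [hφ, aeval_X] using this

open Matrix

lemma cv0 {α : Type*} (a b c d e f : α) : (![a, b, c, d, e, f] : Fin 6 → α) 0 = a := rfl
lemma cv1 {α : Type*} (a b c d e f : α) : (![a, b, c, d, e, f] : Fin 6 → α) 1 = b := rfl
lemma cv2 {α : Type*} (a b c d e f : α) : (![a, b, c, d, e, f] : Fin 6 → α) 2 = c := rfl
lemma cv3 {α : Type*} (a b c d e f : α) : (![a, b, c, d, e, f] : Fin 6 → α) 3 = d := rfl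
lemma cv4 {α : Type*} (a b c d e f : α) : (![a, b, c, d, e, f] : Fin 6 → α) 4 = e := rfl
lemma cv5 {α : Type*} (a b c d e f : α) : (![a, b, c, d, e, f] : Fin 6 → α) 5 = f := rfl

set_option maxHeartbeats 1000000 in
/-- Proposition 1.2, case (b): the kernel of `v ↦ S_bᵀ · v` is the submodule
generated by the columns of the block-diagonal skew-symmetric matrix `M_b`. -/
theorem stmt_13 (l₀ l₁ l₂ l₃ l₄ : MvPolynomial (Fin 5) ℂ)
    (h₀ : l₀.IsHomogeneous 1) (h₁ : l₁.IsHomogeneous 1) (h₂ : l₂.IsHomogeneous 1)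
    (h₃ : l₃.IsHomogeneous 1) (h₄ : l₄.IsHomogeneous 1)
    (hind : LinearIndependent ℂ ![l₀, l₁, l₂, l₃, l₄]) :
    LinearMap.ker
        (Matrix.mulVecLin
          (!![l₂, -l₁, l₀, 0, 0, 0;
              0, 0, 0, l₄, -l₃, l₂] : Matrix (Fin 2) (Fin 6) (MvPolynomial (Fin 5) ℂ))) =
      Submodule.span (MvPolynomial (Fin 5) ℂ)
        (Set.range fun j i =>
          (!![0, l₀, l₁, 0, 0, 0;
              -l₀, 0, l₂, 0, 0, 0;
              -l₁, -l₂, 0, 0, 0, 0;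
              0, 0, 0, 0, l₂, l₃;
              0, 0, 0, -l₂, 0, l₄;
              0, 0, 0, -l₃, -l₄, 0] : Matrix (Fin 6) (Fin 6) (MvPolynomial (Fin 5) ℂ)) i j) := by
  have h2 : ∀ u : Fin 2 → R5, u 0 = 0 → u 1 = 0 → u = 0 := by
    intro u g0 g1; funext i; fin_cases i <;> assumption
  have h6 : ∀ (u w : Fin 6 → R5), u 0 = w 0 → u 1 = w 1 → u 2 = w 2 → u 3 = w 3 →
      u 4 = w 4 → u 5 = w 5 → u = w := by
    intro u w g0 g1 g2 g3 g4 g5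
    funext i
    fin_cases i <;> assumption
  have hcol : ∀ jj : Fin 6, (fun i =>
      (!![0, l₀, l₁, 0, 0, 0;
          -l₀, 0, l₂, 0, 0, 0;
          -l₁, -l₂, 0, 0, 0, 0;
          0, 0, 0, 0, l₂, l₃;
          0, 0, 0, -l₂, 0, l₄;
          0, 0, 0, -l₃, -l₄, 0] : Matrix (Fin 6) (Fin 6) R5) i jj) =
      ![![0, -l₀, -l₁, 0, 0, 0], ![l₀, 0, -l₂, 0, 0, 0], ![l₁, l₂, 0, 0, 0, 0],
        ![0, 0, 0, 0, -l₂, -l₃], ![0, 0, 0, l₂, 0, -l₄], ![0, 0, 0, l₃, l₄, 0]] jj := by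
    intro jj
    fin_cases jj <;> (funext i; fin_cases i <;> rfl)
  apply le_antisymm
  · intro v hv
    rw [LinearMap.mem_ker] at hv
    have hv0 := congrFun hv 0
    have hv1 := congrFun hv 1
    simp [Matrix.mulVecLin_apply, Matrix.mulVec, dotProduct, Fin.sum_univ_six, cv5]
      at hv0 hv1
    set l : Fin 5 → R5 := ![l₀, l₁, l₂, l₃, l₄] with hldef
    have hl : ∀ t, (l t).IsHomogeneous 1 := by
      intro t; fin_cases t <;> simpa [hldef] using ‹_›
    obtain ⟨p, q, r, e1, e2, e3⟩ :=
      lin_syzygy l hl hind (i := 0) (j := 1) (k := 2) (by decide) (by decide) (by decide)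
        (v 0) (v 1) (v 2) (by
          show l 2 * v 0 = l 1 * v 1 - l 0 * v 2
          simp only [hldef, Matrix.cons_val_zero, Matrix.cons_val_one, Matrix.head_cons,
            Matrix.cons_val_two, Matrix.tail_cons]
          linear_combination hv0)
    obtain ⟨p', q', r', f1, f2, f3⟩ :=
      lin_syzygy l hl hind (i := 2) (j := 3) (k := 4) (by decide) (by decide) (by decide)
        (v 3) (v 4) (v 5) (by
          show l 4 * v 3 = l 3 * v 4 - l 2 * v 5
          simp only [hldef, Matrix.cons_val_zero, Matrix.cons_val_one, Matrix.head_cons,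
            Matrix.cons_val_two, Matrix.tail_cons, Matrix.cons_val_three, Matrix.cons_val_four]
          linear_combination hv1)
    simp only [hldef, Matrix.cons_val_zero, Matrix.cons_val_one, Matrix.head_cons,
      Matrix.cons_val_two, Matrix.tail_cons, Matrix.cons_val_three,
      Matrix.cons_val_four] at e1 e2 e3 f1 f2 f3
    have hv' : v = (-r) • ![0, -l₀, -l₁, 0, 0, 0] + p • ![l₀, 0, -l₂, 0, 0, 0]
        + q • ![l₁, l₂, 0, 0, 0, 0] + (-r') • ![0, 0, 0, 0, -l₂, -l₃]
        + p' • ![0, 0, 0, l₂, 0, -l₄] + q' • ![0, 0, 0, l₃, l₄, 0] := by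
      apply h6 <;>
        simp only [Fin.reduceFinMk, Fin.isValue, cv0, cv1, cv2, cv3, cv4, cv5, Pi.add_apply, Pi.smul_apply, smul_eq_mul] <;>
        first
          | linear_combination e1 | linear_combination e2 | linear_combination e3
          | linear_combination f1 | linear_combination f2 | linear_combination f3
    rw [hv']
    have hg : ∀ (c : R5) (jj : Fin 6),
        c • (![![0, -l₀, -l₁, 0, 0, 0], ![l₀, 0, -l₂, 0, 0, 0], ![l₁, l₂, 0, 0, 0, 0],
            ![0, 0, 0, 0, -l₂, -l₃], ![0, 0, 0, l₂, 0, -l₄], ![0, 0, 0, l₃, l₄, 0]] jj)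
          ∈ Submodule.span R5 (Set.range fun j i =>
            (!![0, l₀, l₁, 0, 0, 0;
                -l₀, 0, l₂, 0, 0, 0;
                -l₁, -l₂, 0, 0, 0, 0;
                0, 0, 0, 0, l₂, l₃;
                0, 0, 0, -l₂, 0, l₄;
                0, 0, 0, -l₃, -l₄, 0] : Matrix (Fin 6) (Fin 6) R5) i j) := by
      intro c jj
      rw [← hcol jj]
      exact Submodule.smul_mem _ _ (Submodule.subset_span ⟨jj, rfl⟩)
    exact Submodule.add_mem _ (Submodule.add_mem _ (Submodule.add_mem _ (Submodule.add_mem _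
      (Submodule.add_mem _ (hg (-r) 0) (hg p 1)) (hg q 2)) (hg (-r') 3)) (hg p' 4)) (hg q' 5)
  · rw [Submodule.span_le]
    rintro w ⟨jj, rfl⟩
    rw [SetLike.mem_coe, LinearMap.mem_ker]
    beta_reduce
    rw [hcol jj]
    fin_cases jj <;>
      · apply h2 <;>
          · simp only [Fin.reduceFinMk, Fin.isValue, Matrix.mulVecLin_apply, Matrix.mulVec,
              dotProduct, Fin.sum_univ_six, Matrix.of_apply, Matrix.cons_val',
              Matrix.cons_val_zero, Matrix.cons_val_one, Matrix.head_cons, Matrix.empty_val',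
              Matrix.cons_val_fin_one, Matrix.vecHead, Matrix.vecTail, Matrix.cons_val_two, Matrix.cons_val_three, Matrix.cons_val_four, Matrix.tail_cons, Matrix.cons_val_succ, Function.comp, cv0, cv1, cv2, cv3, cv4, cv5, Pi.zero_apply]
            ring
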